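/- Observed conditional mean expansion: under Assumption 1, for every (z,z') ∈ {0,1}², E[Y | Z_i=z, Z_j=z'] = E[Y(0,0)] + E[(Y(1,0)−Y(0,0)) · D_i(z,z') · (1−D_j(z',z))] + E[(Y(0,1)−Y(0,0)) · (1−D_i(z,z')) · D_j(z',z)] + E[(Y(1,1)−Y(0,0)) · D_i(z,z') · D_j(z',z)]. -/

import Mathlib

open MeasureTheory ProbabilityTheory

noncomputable def bInd (b : Bool) : ℝ := if b then 1 else 0

theorem stmt_19
    {Ω : Type*} [MeasurableSpace Ω] (P : Measure Ω) [IsProbabilityMeasure P]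
    (Y : Bool → Bool → Ω → ℝ) (Di Dj : Bool → Bool → Ω → Bool)
    (Zi Zj : Ω → Bool)
    (hYmeas : ∀ d d', Measurable (Y d d'))
    (hYint : ∀ d d', Integrable (Y d d') P)
    (hDimeas : ∀ z z', Measurable (Di z z'))
    (hDjmeas : ∀ z z', Measurable (Dj z z'))
    (hZi : Measurable Zi) (hZj : Measurable Zj)
    (hpos : ∀ z z', 0 < P ({x | Zi x = z} ∩ {x | Zj x = z'}))
    (hIV : IndepFun
      (fun ω => ((fun d d' => Y d d' ω),
                 (fun z z' => Di z z' ω),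
                 (fun z z' => Dj z z' ω)))
      (fun ω => (Zi ω, Zj ω)) P)
    :
    ∀ z z' : Bool,
    (∫ ω, (Y (Di (Zi ω) (Zj ω) ω) (Dj (Zj ω) (Zi ω) ω) ω) ∂(P[|({x | Zi x = z} ∩ {x | Zj x = z'})]))
    = (∫ ω, Y false false ω ∂P)
      + (∫ ω, (Y true false ω - Y false false ω) * bInd (Di z z' ω) * (1 - bInd (Dj z' z ω)) ∂P)
      + (∫ ω, (Y false true ω - Y false false ω) * (1 - bInd (Di z z' ω)) * bInd (Dj z' z ω) ∂P)
      + (∫ ω, (Y true true ω - Y false false ω) * bInd (Di z z' ω) * bInd (Dj z' z ω) ∂P) := by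
  classical
  intro z z'
  set A : Set Ω := {x | Zi x = z} ∩ {x | Zj x = z'} with hAdef
  have hAmeas : MeasurableSet A :=
    (hZi (MeasurableSet.singleton z)).inter (hZj (MeasurableSet.singleton z'))
  set X : Ω → ℝ := fun ω => Y (Di z z' ω) (Dj z' z ω) ω with hXdef
  -- measurability of bInd compositions
  have hbc1 : Measurable (fun ω => bInd (Di z z' ω)) :=
    (Measurable.of_discrete (f := bInd)).comp (hDimeas z z')
  have hbc2 : Measurable (fun ω => bInd (Dj z' z ω)) :=
    (Measurable.of_discrete (f := bInd)).comp (hDjmeas z' z)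
  -- integrability of the three product terms
  have hint1 : Integrable
      (fun ω => (Y true false ω - Y false false ω) * bInd (Di z z' ω) * (1 - bInd (Dj z' z ω))) P := by
    have h : Integrable (fun ω => (bInd (Di z z' ω) * (1 - bInd (Dj z' z ω))) *
        (Y true false ω - Y false false ω)) P := by
      refine Integrable.bdd_mul (c := 1) ((hYint true false).sub (hYint false false))
        ((hbc1.mul (measurable_const.sub hbc2)).aestronglyMeasurable) ?_
      refine Filter.Eventually.of_forall fun ω => ?_
      cases h1 : Di z z' ω <;> cases h2 : Dj z' z ω <;> simp [bInd]
    exact h.congr (Filter.Eventually.of_forall fun ω => by ring)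
  have hint2 : Integrable
      (fun ω => (Y false true ω - Y false false ω) * (1 - bInd (Di z z' ω)) * bInd (Dj z' z ω)) P := by
    have h : Integrable (fun ω => ((1 - bInd (Di z z' ω)) * bInd (Dj z' z ω)) *
        (Y false true ω - Y false false ω)) P := by
      refine Integrable.bdd_mul (c := 1) ((hYint false true).sub (hYint false false))
        (((measurable_const.sub hbc1).mul hbc2).aestronglyMeasurable) ?_
      refine Filter.Eventually.of_forall fun ω => ?_
      cases h1 : Di z z' ω <;> cases h2 : Dj z' z ω <;> simp [bInd]
    exact h.congr (Filter.Eventually.of_forall fun ω => by ring)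
  have hint3 : Integrable
      (fun ω => (Y true true ω - Y false false ω) * bInd (Di z z' ω) * bInd (Dj z' z ω)) P := by
    have h : Integrable (fun ω => (bInd (Di z z' ω) * bInd (Dj z' z ω)) *
        (Y true true ω - Y false false ω)) P := by
      refine Integrable.bdd_mul (c := 1) ((hYint true true).sub (hYint false false))
        ((hbc1.mul hbc2).aestronglyMeasurable) ?_
      refine Filter.Eventually.of_forall fun ω => ?_
      cases h1 : Di z z' ω <;> cases h2 : Dj z' z ω <;> simp [bInd]
    exact h.congr (Filter.Eventually.of_forall fun ω => by ring)
  -- pointwise decomposition of X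
  have hXF : X = fun ω => Y false false ω
      + (Y true false ω - Y false false ω) * bInd (Di z z' ω) * (1 - bInd (Dj z' z ω))
      + (Y false true ω - Y false false ω) * (1 - bInd (Di z z' ω)) * bInd (Dj z' z ω)
      + (Y true true ω - Y false false ω) * bInd (Di z z' ω) * bInd (Dj z' z ω) := by
    funext ω
    simp only [hXdef]
    cases h1 : Di z z' ω <;> cases h2 : Dj z' z ω <;> simp [bInd] <;> ring
  have hXint : Integrable X P := by
    rw [hXF]
    exact (((hYint false false).add hint1).add hint2).add hint3
  -- the independence statement for X and the indicator of A
  set φ : Bool × Bool → ℝ := fun p => if p = (z, z') then 1 else 0 with hφdef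
  set g : (Bool → Bool → ℝ) × (Bool → Bool → Bool) × (Bool → Bool → Bool) → ℝ :=
    fun p => if p.2.1 z z' then (if p.2.2 z' z then p.1 true true else p.1 true false)
             else (if p.2.2 z' z then p.1 false true else p.1 false false) with hgdef
  have hm1 : Measurable (fun p : (Bool → Bool → ℝ) × (Bool → Bool → Bool) × (Bool → Bool → Bool) =>
      p.2.1 z z') :=
    (measurable_pi_apply z').comp ((measurable_pi_apply z).comp (measurable_fst.comp measurable_snd))
  have hm2 : Measurable (fun p : (Bool → Bool → ℝ) × (Bool → Bool → Bool) × (Bool → Bool → Bool) =>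
      p.2.2 z' z) :=
    (measurable_pi_apply z).comp ((measurable_pi_apply z').comp (measurable_snd.comp measurable_snd))
  have hmy : ∀ d d' : Bool, Measurable
      (fun p : (Bool → Bool → ℝ) × (Bool → Bool → Bool) × (Bool → Bool → Bool) => p.1 d d') :=
    fun d d' => (measurable_pi_apply d').comp ((measurable_pi_apply d).comp measurable_fst)
  have hgmeas : Measurable g := by
    refine Measurable.ite (hm1 (MeasurableSet.singleton true)) ?_ ?_
    · exact Measurable.ite (hm2 (MeasurableSet.singleton true)) (hmy true true) (hmy true false)
    · exact Measurable.ite (hm2 (MeasurableSet.singleton true)) (hmy false true) (hmy false false)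
  have hφmeas : Measurable φ := Measurable.of_discrete
  have hindep : IndepFun X (fun ω => φ (Zi ω, Zj ω)) P := by
    have h := hIV.comp hgmeas hφmeas
    have hgW : (g ∘ fun ω => ((fun d d' => Y d d' ω),
        (fun z z' => Di z z' ω), (fun z z' => Dj z z' ω))) = X := by
      funext ω
      simp only [Function.comp, hgdef, hXdef]
      cases h1 : Di z z' ω <;> cases h2 : Dj z' z ω <;> simp
    rw [hgW] at h
    exact h
  -- indicator form
  have hBind : (fun ω => φ (Zi ω, Zj ω)) = A.indicator (fun _ => (1 : ℝ)) := by
    funext ω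
    have hiff : ((Zi ω, Zj ω) = (z, z')) ↔ ω ∈ A := by
      constructor
      · intro hc; exact ⟨congrArg Prod.fst hc, congrArg Prod.snd hc⟩
      · intro hω; exact Prod.ext hω.1 hω.2
    simp only [hφdef, Set.indicator_apply, hiff]
  -- key: set integral of X over A equals (∫ X) * P A
  have hkey : ∫ ω in A, X ω ∂P = (∫ ω, X ω ∂P) * (P A).toReal := by
    have h := hindep.integral_fun_mul_eq_mul_integral hXint.aestronglyMeasurable
      (by rw [hBind]; exact (measurable_one.indicator hAmeas).aestronglyMeasurable)
    have hleft : (∫ ω, X ω * φ (Zi ω, Zj ω) ∂P) = ∫ ω in A, X ω ∂P := by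
      rw [← integral_indicator hAmeas]
      congr 1
      funext ω
      by_cases hω : ω ∈ A
      · rw [Set.indicator_of_mem hω]
        rw [show φ (Zi ω, Zj ω) = A.indicator (fun _ => (1 : ℝ)) ω from congrFun hBind ω,
          Set.indicator_of_mem hω, mul_one]
      · rw [Set.indicator_of_notMem hω]
        rw [show φ (Zi ω, Zj ω) = A.indicator (fun _ => (1 : ℝ)) ω from congrFun hBind ω,
          Set.indicator_of_notMem hω, mul_zero]
    have hright : (∫ ω, φ (Zi ω, Zj ω) ∂P) = (P A).toReal := by
      rw [hBind, integral_indicator_const (1 : ℝ) hAmeas]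
      simp [Measure.real]
    rw [← hleft, h, hright]
  -- rewrite the conditional integral
  have hA0 : P A ≠ 0 := (hpos z z').ne'
  have hAtop : P A ≠ ⊤ := (measure_lt_top P A).ne
  have hLHS : (∫ ω, (Y (Di (Zi ω) (Zj ω) ω) (Dj (Zj ω) (Zi ω) ω) ω) ∂(P[|A]))
      = ∫ ω, X ω ∂P := by
    rw [ProbabilityTheory.cond, integral_smul_measure]
    have hcongr : ∫ ω in A, (Y (Di (Zi ω) (Zj ω) ω) (Dj (Zj ω) (Zi ω) ω) ω) ∂P
        = ∫ ω in A, X ω ∂P := by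
      refine setIntegral_congr_fun hAmeas fun ω hω => ?_
      obtain ⟨h1, h2⟩ := hω
      simp only [hXdef]
      rw [show Zi ω = z from h1, show Zj ω = z' from h2]
    rw [hcongr, hkey, ENNReal.toReal_inv, smul_eq_mul]
    rw [mul_comm (∫ ω, X ω ∂P) ((P A).toReal), ← mul_assoc]
    rw [inv_mul_cancel₀ (by simp [ENNReal.toReal_ne_zero, hA0, hAtop]), one_mul]
  have i1 : Integrable (fun ω => Y false false ω
      + (Y true false ω - Y false false ω) * bInd (Di z z' ω) * (1 - bInd (Dj z' z ω))) P :=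
    (hYint false false).add hint1
  have i2 : Integrable (fun ω => Y false false ω
      + (Y true false ω - Y false false ω) * bInd (Di z z' ω) * (1 - bInd (Dj z' z ω))
      + (Y false true ω - Y false false ω) * (1 - bInd (Di z z' ω)) * bInd (Dj z' z ω)) P :=
    i1.add hint2
  rw [hLHS]
  simp only [hXF]
  rw [integral_add i2 hint3, integral_add i1 hint2, integral_add (hYint false false) hint1]
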